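/- arXiv:2105.06144 — 4 statements merged into one kernel-verified Lean document; each statement's English description precedes it below -/
import Mathlib

section
/- The induced matching number of the bipartite Kneser graph H(m,k) is at least C(2k,k). -/
open Finset

/-- Vertex type of the bipartite Kneser graph: `k`-subsets of `[m]` on the left,
`(m-k)`-subsets on the right. -/
abbrev KVert (m k : ℕ) :=
  {A : Finset (Fin m) // A.card = k} ⊕ {B : Finset (Fin m) // B.card = m - k}

def bkAdj (m k : ℕ) : KVert m k → KVert m k → Prop
  | Sum.inl A, Sum.inr B => A.1 ⊆ B.1
  | Sum.inr B, Sum.inl A => A.1 ⊆ B.1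
  | _, _ => False

/-- The bipartite Kneser graph `H(m,k)`. -/
def HBK (m k : ℕ) : SimpleGraph (KVert m k) where
  Adj := bkAdj m k
  symm := by
    constructor
    intro u v h
    cases u <;> cases v <;> simp_all [bkAdj]
  loopless := by
    constructor
    intro u
    cases u <;> simp [bkAdj]

instance (m k : ℕ) : DecidableRel (HBK m k).Adj := fun a b =>
  match a, b with
  | Sum.inl A, Sum.inr B => inferInstanceAs (Decidable (A.1 ⊆ B.1))
  | Sum.inr B, Sum.inl A => inferInstanceAs (Decidable (A.1 ⊆ B.1))
  | Sum.inl _, Sum.inl _ => inferInstanceAs (Decidable False)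
  | Sum.inr _, Sum.inr _ => inferInstanceAs (Decidable False)

/-- The induced matching number of the bipartite Kneser graph `H(m,k)` is at least
`C(2k,k)`: there is a set of `C(2k,k)` edges that is pairwise 3-disjoint. -/
theorem inducedMatchingNumber_ge (m k : ℕ) (hk : 1 ≤ k) (hm : 2 * k ≤ m) :
    ∃ M : Finset (KVert m k × KVert m k),
      M.card = (2 * k).choose k ∧
      (∀ e ∈ M, (HBK m k).Adj e.1 e.2) ∧
      (∀ e ∈ M, ∀ e' ∈ M, e ≠ e' →
        e.1 ≠ e'.1 ∧ e.1 ≠ e'.2 ∧ e.2 ≠ e'.1 ∧ e.2 ≠ e'.2 ∧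
        ¬ (HBK m k).Adj e.1 e'.1 ∧ ¬ (HBK m k).Adj e.1 e'.2 ∧
        ¬ (HBK m k).Adj e.2 e'.1 ∧ ¬ (HBK m k).Adj e.2 e'.2) := by
  classical
  set S : Finset (Fin m) := (Finset.range (2*k)).attachFin
    (fun a ha => lt_of_lt_of_le (Finset.mem_range.mp ha) hm) with hS
  have hScard : S.card = 2*k := by
    simp [hS, Finset.card_attachFin]
  have hmemS : ∀ i : Fin m, i ∈ S ↔ (i : ℕ) < 2*k := by
    intro i; simp [hS, Finset.mem_attachFin]
  have hcardA : ∀ A : {x // x ∈ S.powersetCard k}, (A.1).card = k := by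
    intro A
    exact (Finset.mem_powersetCard.mp A.2).2
  have hsubA : ∀ A : {x // x ∈ S.powersetCard k}, A.1 ⊆ S := by
    intro A
    exact (Finset.mem_powersetCard.mp A.2).1
  have hcardB : ∀ A : {x // x ∈ S.powersetCard k}, (A.1 ∪ Sᶜ).card = m - k := by
    intro A
    have hdisj : Disjoint A.1 Sᶜ := by
      refine Finset.disjoint_left.mpr ?_
      intro x hx hxc
      exact (Finset.mem_compl.mp hxc) (hsubA A hx)
    rw [Finset.card_union_of_disjoint hdisj, hcardA, Finset.card_compl, hScard]
    simp only [Fintype.card_fin]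
    omega
  refine ⟨(S.powersetCard k).attach.image
    (fun A => (Sum.inl ⟨A.1, hcardA A⟩, Sum.inr ⟨A.1 ∪ Sᶜ, hcardB A⟩)), ?_, ?_, ?_⟩
  · rw [Finset.card_image_of_injective _ ?_, Finset.card_attach,
      Finset.card_powersetCard, hScard]
    intro A A' h
    have : A.1 = A'.1 := by
      have := congrArg Prod.fst h
      simpa using this
    exact Subtype.ext this
  · intro e he
    simp only [Finset.mem_image, Finset.mem_attach, true_and] at he
    obtain ⟨A, rfl⟩ := he
    simp [HBK, bkAdj]
  · intro e he e' he' hne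
    simp only [Finset.mem_image, Finset.mem_attach, true_and] at he he'
    obtain ⟨A, rfl⟩ := he
    obtain ⟨A', rfl⟩ := he'
    have hAA' : A.1 ≠ A'.1 := by
      intro h
      exact hne (by simp [Subtype.ext h])
    have key : ∀ X Y : {x // x ∈ S.powersetCard k}, X.1 ≠ Y.1 → ¬ X.1 ⊆ Y.1 ∪ Sᶜ := by
      intro X Y hXY hsub
      apply hXY
      apply Finset.eq_of_subset_of_card_le
      · intro x hx
        rcases Finset.mem_union.mp (hsub hx) with h | h
        · exact h
        · exact absurd (hsubA X hx) (Finset.mem_compl.mp h)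
      · rw [hcardA, hcardA]
    refine ⟨?_, ?_, ?_, ?_, ?_, ?_, ?_, ?_⟩
    · simp only [ne_eq, Sum.inl.injEq, Subtype.mk.injEq]; exact hAA'
    · simp
    · simp
    · simp only [ne_eq, Sum.inr.injEq, Subtype.mk.injEq]
      intro h
      apply hAA'
      apply Finset.eq_of_subset_of_card_le
      · intro x hx
        have : x ∈ A'.1 ∪ Sᶜ := h ▸ Finset.mem_union_left _ hx
        rcases Finset.mem_union.mp this with h' | h'
        · exact h'
        · exact absurd (hsubA A hx) (Finset.mem_compl.mp h')
      · rw [hcardA, hcardA]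
    · simp [HBK, bkAdj]
    · exact key A A' hAA'
    · exact key A' A hAA'.symm
    · simp [HBK, bkAdj]
end

section
/- Let m > 2k, T ⊆ [m] with |T| = m−2k+1, W the set of k-subsets disjoint from T together with the (m−k)-subsets containing T. Then W is an independent set in H(m,k) of cardinality 2·C(2k−1,k−1) = C(2k,k). -/
open Finset

/-- Membership in the set `W`: left vertices (k-subsets) disjoint from `T`, right
vertices ((m-k)-subsets) containing `T`. -/
def inW (m k : ℕ) (T : Finset (Fin m)) : KVert m k → Prop :=
  Sum.elim (fun A => Disjoint A.1 T) (fun B => T ⊆ B.1)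

instance (m k : ℕ) (T : Finset (Fin m)) : DecidablePred (inW m k T) := fun v =>
  match v with
  | Sum.inl A => inferInstanceAs (Decidable (Disjoint A.1 T))
  | Sum.inr B => inferInstanceAs (Decidable (T ⊆ B.1))


/-- For `m > 2k` and `T ⊆ [m]` with `|T| = m-2k+1`, the set `W` of `k`-subsets disjoint
from `T` together with the `(m-k)`-subsets containing `T` is an independent set of
`H(m,k)` of cardinality `2·C(2k-1,k-1) = C(2k,k)`. -/
theorem W_independent (m k : ℕ) (hk : 1 ≤ k) (hm : 2 * k < m)
    (T : Finset (Fin m)) (hT : T.card = m - 2 * k + 1) :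
    (∀ v ∈ Finset.univ.filter (inW m k T), ∀ w ∈ Finset.univ.filter (inW m k T),
        ¬ (HBK m k).Adj v w) ∧
    (Finset.univ.filter (inW m k T)).card = 2 * (2 * k - 1).choose (k - 1) ∧
    (Finset.univ.filter (inW m k T)).card = (2 * k).choose k := by
  have hTc : Tᶜ.card = 2 * k - 1 := by
    rw [Finset.card_compl, hT, Fintype.card_fin]; omega
  -- independence key fact
  have key : ∀ (A : {A : Finset (Fin m) // A.card = k})
      (B : {B : Finset (Fin m) // B.card = m - k}),
      Disjoint A.1 T → T ⊆ B.1 → ¬ A.1 ⊆ B.1 := by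
    intro A B hd hTB hAB
    have h1 : A.1 ∪ T ⊆ B.1 := Finset.union_subset hAB hTB
    have h2 := Finset.card_le_card h1
    rw [Finset.card_union_of_disjoint hd, A.2, hT, B.2] at h2
    omega
  refine ⟨?_, ?_, ?_⟩
  · intro v hv w hw hadj
    simp only [Finset.mem_filter, Finset.mem_univ, true_and] at hv hw
    cases v with
    | inl A =>
      cases w with
      | inl A' => exact hadj
      | inr B => exact key A B hv hw hadj
    | inr B =>
      cases w with
      | inl A => exact key A B hw hv hadj
      | inr B' => exact hadj
  all_goals {
    have hsplit : (Finset.univ.filter (inW m k T)).card =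
        (Finset.univ.filter (fun A : {A : Finset (Fin m) // A.card = k} =>
          Disjoint A.1 T)).card +
        (Finset.univ.filter (fun B : {B : Finset (Fin m) // B.card = m - k} =>
          T ⊆ B.1)).card := by
      have : Finset.univ.filter (inW m k T) =
          (Finset.univ.filter (fun A : {A : Finset (Fin m) // A.card = k} =>
            Disjoint A.1 T)).disjSum
          (Finset.univ.filter (fun B : {B : Finset (Fin m) // B.card = m - k} =>
            T ⊆ B.1)) := by
        ext (x | x) <;> rw [Finset.mem_filter] <;> simp [inW, Finset.mem_disjSum]
      rw [this, Finset.card_disjSum]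
    have hleft : (Finset.univ.filter (fun A : {A : Finset (Fin m) // A.card = k} =>
        Disjoint A.1 T)).card = (2 * k - 1).choose k := by
      rw [← hTc, ← Finset.card_powersetCard]
      apply Finset.card_bij (fun A _ => A.1)
      · intro A hA
        simp only [Finset.mem_filter, Finset.mem_univ, true_and] at hA
        rw [Finset.mem_powersetCard]
        exact ⟨le_compl_iff_disjoint_right.mpr hA, A.2⟩
      · intro a _ b _ h; exact Subtype.ext h
      · intro S hS
        rw [Finset.mem_powersetCard] at hS
        refine ⟨⟨S, hS.2⟩, ?_, rfl⟩
        simp only [Finset.mem_filter, Finset.mem_univ, true_and]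
        exact le_compl_iff_disjoint_right.mp hS.1
    have hright : (Finset.univ.filter (fun B : {B : Finset (Fin m) // B.card = m - k} =>
        T ⊆ B.1)).card = (2 * k - 1).choose k := by
      rw [← hTc, ← Finset.card_powersetCard]
      apply Finset.card_bij (fun B _ => B.1ᶜ)
      · intro B hB
        simp only [Finset.mem_filter, Finset.mem_univ, true_and] at hB
        rw [Finset.mem_powersetCard]
        constructor
        · exact Finset.compl_subset_compl.mpr hB
        · rw [Finset.card_compl, B.2, Fintype.card_fin]; omega
      · intro a _ b _ h
        exact Subtype.ext (by simpa using congrArg compl h)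
      · intro S hS
        rw [Finset.mem_powersetCard] at hS
        have hc : Sᶜ.card = m - k := by
          rw [Finset.card_compl, hS.2, Fintype.card_fin]
        refine ⟨⟨Sᶜ, hc⟩, ?_, by simp⟩
        simp only [Finset.mem_filter, Finset.mem_univ, true_and]
        exact Finset.subset_compl_comm.mp hS.1
    have hsymm : (2 * k - 1).choose k = (2 * k - 1).choose (k - 1) := by
      rw [← Nat.choose_symm (by omega)]
      congr 1; omega
    have hpascal : (2 * k).choose k = 2 * (2 * k - 1).choose (k - 1) := by
      have h1 : 2 * k = (2 * k - 1) + 1 := by omega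
      have h2 : k = (k - 1) + 1 := by omega
      rw [h1, h2, Nat.choose_succ_succ]
      simp only [Nat.add_sub_cancel, Nat.succ_eq_add_one, ← h2]
      rw [← hsymm]; ring
    omega
  }
end

section
/- The independent domination number of the bipartite Kneser graph H(m,k) satisfies i(H(m,k)) ≤ C(2k,k) for all m ≥ 2k. -/
open Finset

/-- The independent domination number of `H(m,k)` is at most `C(2k,k)`: there is an
independent dominating set of cardinality at most `C(2k,k)`. -/
theorem independent_domination_le (m k : ℕ) (hk : 1 ≤ k) (hm : 2 * k ≤ m) :
    ∃ W : Finset (KVert m k),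
      W.card ≤ (2 * k).choose k ∧
      (∀ v ∈ W, ∀ w ∈ W, ¬ (HBK m k).Adj v w) ∧
      (∀ v : KVert m k, v ∈ W ∨ ∃ w ∈ W, (HBK m k).Adj v w) := by
  classical
  have hm0 : 0 < m := by omega
  set z : Fin m := ⟨0, hm0⟩ with hzdef
  have hlt : ∀ j ∈ Finset.range (2 * k), j < m := fun j hj => by
    have := Finset.mem_range.1 hj; omega
  set X : Finset (Fin m) := (Finset.range (2 * k)).attachFin hlt with hXdef
  have hmemX : ∀ i : Fin m, i ∈ X ↔ (i : ℕ) < 2 * k := by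
    intro i; rw [hXdef, Finset.mem_attachFin, Finset.mem_range]
  have hXcard : X.card = 2 * k := by
    rw [hXdef, Finset.card_attachFin, Finset.card_range]
  have hXccard : Xᶜ.card = m - 2 * k := by
    rw [Finset.card_compl, hXcard]; simp
  have hzX : z ∈ X := by rw [hmemX]; simp [hzdef]; omega
  -- the map from k-subsets of X to vertices
  have hcardR : ∀ C : Finset (Fin m), C ⊆ X → C.card = k → (Xᶜ ∪ C).card = m - k := by
    intro C hCX hCk
    have hdisj : Disjoint Xᶜ C :=
      Finset.disjoint_left.2 fun a ha hc => (Finset.mem_compl.1 ha) (hCX hc)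
    rw [Finset.card_union_of_disjoint hdisj, hXccard, hCk]
    omega
  let f : {C // C ∈ X.powersetCard k} → KVert m k := fun C =>
    if h : z ∈ C.1 then
      Sum.inr ⟨Xᶜ ∪ C.1,
        hcardR C.1 (Finset.mem_powersetCard.1 C.2).1 (Finset.mem_powersetCard.1 C.2).2⟩
    else
      Sum.inl ⟨C.1, (Finset.mem_powersetCard.1 C.2).2⟩
  set W : Finset (KVert m k) := (X.powersetCard k).attach.image f with hWdef
  -- membership criteria
  have hmemW : ∀ v, v ∈ W ↔ ∃ C, ∃ h : C ∈ X.powersetCard k, f ⟨C, h⟩ = v := by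
    intro v
    rw [hWdef, Finset.mem_image]
    constructor
    · rintro ⟨⟨C, hC⟩, -, hfc⟩; exact ⟨C, hC, hfc⟩
    · rintro ⟨C, hC, hfc⟩; exact ⟨⟨C, hC⟩, Finset.mem_attach _ _, hfc⟩
  refine ⟨W, ?_, ?_, ?_⟩
  · calc W.card ≤ (X.powersetCard k).attach.card := Finset.card_image_le
      _ = (X.powersetCard k).card := Finset.card_attach
      _ = (2 * k).choose k := by rw [Finset.card_powersetCard, hXcard]
  · -- independence
    intro v hv w hw hadj
    rw [hmemW] at hv hw
    obtain ⟨C, hC, hfc⟩ := hv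
    obtain ⟨D, hD, hfd⟩ := hw
    obtain ⟨hCX, hCk⟩ := Finset.mem_powersetCard.1 hC
    obtain ⟨hDX, hDk⟩ := Finset.mem_powersetCard.1 hD
    -- in all four cases of membership of z, derive contradiction
    by_cases hzC : z ∈ C <;> by_cases hzD : z ∈ D <;>
      simp only [f, hzC, hzD, dif_pos, dif_neg, not_false_iff] at hfc hfd <;>
      subst hfc <;> subst hfd <;>
      simp only [HBK, bkAdj] at hadj
    · -- v = inr (Xᶜ ∪ C), w = inl D : D ⊆ Xᶜ ∪ C
      have hsub : D ⊆ C := by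
        intro a ha
        rcases Finset.mem_union.1 (hadj ha) with h1 | h1
        · exact absurd (hDX ha) (Finset.mem_compl.1 h1)
        · exact h1
      have : D = C := Finset.eq_of_subset_of_card_le hsub (by omega)
      exact hzD (this ▸ hzC)
    · -- v = inl C, w = inr (Xᶜ ∪ D) : C ⊆ Xᶜ ∪ D
      have hsub : C ⊆ D := by
        intro a ha
        rcases Finset.mem_union.1 (hadj ha) with h1 | h1
        · exact absurd (hCX ha) (Finset.mem_compl.1 h1)
        · exact h1
      have : C = D := Finset.eq_of_subset_of_card_le hsub (by omega)
      exact hzC (this ▸ hzD)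
  · -- domination
    intro v
    rcases v with ⟨A, hA⟩ | ⟨B, hB⟩
    · -- left vertex
      by_cases hAX : A ⊆ X
      · by_cases hzA : z ∈ A
        · -- z ∈ A ⊆ X : use C = A, get right vertex Xᶜ ∪ A ⊇ A
          right
          have hC : A ∈ X.powersetCard k := Finset.mem_powersetCard.2 ⟨hAX, hA⟩
          refine ⟨f ⟨A, hC⟩, (hmemW _).2 ⟨A, hC, rfl⟩, ?_⟩
          simp only [f, dif_pos hzA]
          show A ⊆ Xᶜ ∪ A
          exact Finset.subset_union_right
        · -- z ∉ A ⊆ X : v ∈ W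
          left
          have hC : A ∈ X.powersetCard k := Finset.mem_powersetCard.2 ⟨hAX, hA⟩
          refine (hmemW _).2 ⟨A, hC, ?_⟩
          simp only [f, dif_neg hzA]
      · -- A ⊄ X : extend (A ∩ X) ∪ {z} to a k-set C ⊆ X with z ∈ C
        right
        have hssub : A ∩ X ⊂ A := by
          refine Finset.ssubset_iff_of_subset Finset.inter_subset_left |>.2 ?_
          obtain ⟨a, ha, haX⟩ := Finset.not_subset.1 hAX
          exact ⟨a, ha, fun h => haX (Finset.mem_of_mem_inter_right h)⟩
        have hcardAX : (A ∩ X).card < k := hA ▸ Finset.card_lt_card hssub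
        set B0 : Finset (Fin m) := insert z (A ∩ X) with hB0
        have hB0X : B0 ⊆ X := by
          rw [hB0]; intro a ha
          rcases Finset.mem_insert.1 ha with h | h
          · exact h ▸ hzX
          · exact Finset.mem_of_mem_inter_right h
        have hB0card : B0.card ≤ k := by
          rw [hB0]
          calc (insert z (A ∩ X)).card ≤ (A ∩ X).card + 1 := Finset.card_insert_le _ _
            _ ≤ k := by omega
        obtain ⟨C, hB0C, hCX, hCcard⟩ :=
          Finset.exists_subsuperset_card_eq (n := k - B0.card + B0.card) hB0X (by omega) (by rw [hXcard]; omega)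
        have hCk : C.card = k := by rw [hCcard]; omega
        have hC : C ∈ X.powersetCard k := Finset.mem_powersetCard.2 ⟨hCX, hCk⟩
        have hzC : z ∈ C := hB0C (by rw [hB0]; exact Finset.mem_insert_self _ _)
        refine ⟨f ⟨C, hC⟩, (hmemW _).2 ⟨C, hC, rfl⟩, ?_⟩
        simp only [f, dif_pos hzC]
        show A ⊆ Xᶜ ∪ C
        intro a ha
        by_cases haX : a ∈ X
        · exact Finset.mem_union_right _ (hB0C (by
            rw [hB0]; exact Finset.mem_insert_of_mem (Finset.mem_inter.2 ⟨ha, haX⟩)))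
        · exact Finset.mem_union_left _ (Finset.mem_compl.2 haX)
    · -- right vertex
      have hBXcard : (B ∩ X).card + (B ∩ Xᶜ).card = m - k := by
        rw [← hB]
        rw [← Finset.card_union_of_disjoint]
        · congr 1
          rw [← Finset.inter_union_distrib_left, Finset.union_compl, Finset.inter_univ]
        · exact Finset.disjoint_of_subset_left Finset.inter_subset_right
            (Finset.disjoint_of_subset_right Finset.inter_subset_right disjoint_compl_right)
      have hBXc_le : (B ∩ Xᶜ).card ≤ m - 2 * k := by
        rw [← hXccard]; exact Finset.card_le_card Finset.inter_subset_right
      by_cases hmem : Xᶜ ⊆ B ∧ z ∈ B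
      · -- v ∈ W via C = B ∩ X
        left
        have hXcB : B ∩ Xᶜ = Xᶜ := by
          apply Finset.inter_eq_right.2 hmem.1
        have hCk : (B ∩ X).card = k := by
          have := hBXcard
          rw [hXcB, hXccard] at this
          omega
        have hC : B ∩ X ∈ X.powersetCard k :=
          Finset.mem_powersetCard.2 ⟨Finset.inter_subset_right, hCk⟩
        have hzC : z ∈ B ∩ X := Finset.mem_inter.2 ⟨hmem.2, hzX⟩
        refine (hmemW _).2 ⟨B ∩ X, hC, ?_⟩
        simp only [f, dif_pos hzC]
        congr 1
        ext1
        show Xᶜ ∪ (B ∩ X) = B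
        ext a
        simp only [Finset.mem_union, Finset.mem_inter, Finset.mem_compl]
        constructor
        · rintro (h | ⟨h, -⟩)
          · exact hmem.1 (Finset.mem_compl.2 h)
          · exact h
        · intro ha
          by_cases haX : a ∈ X
          · exact Or.inr ⟨ha, haX⟩
          · exact Or.inl haX
      · -- find A ⊆ (B ∩ X) \ {z}, |A| = k
        right
        have hkey : k ≤ ((B ∩ X) \ {z}).card := by
          have h1 : k ≤ (B ∩ X).card := by omega
          by_cases hzB : z ∈ B
          · -- then ¬ Xᶜ ⊆ B, so (B ∩ Xᶜ).card < m - 2k hence (B∩X).card ≥ k+1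
            have hnsub : ¬ Xᶜ ⊆ B := fun h => hmem ⟨h, hzB⟩
            have hssub : B ∩ Xᶜ ⊂ Xᶜ := by
              refine Finset.ssubset_iff_of_subset Finset.inter_subset_right |>.2 ?_
              obtain ⟨a, ha, haB⟩ := Finset.not_subset.1 hnsub
              exact ⟨a, ha, fun h => haB (Finset.mem_of_mem_inter_left h)⟩
            have h2 : (B ∩ Xᶜ).card < m - 2 * k := hXccard ▸ Finset.card_lt_card hssub
            have h3 : k + 1 ≤ (B ∩ X).card := by omega
            calc k ≤ (B ∩ X).card - 1 := by omega
              _ ≤ ((B ∩ X) \ {z}).card := by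
                  have h5 := Finset.le_card_sdiff {z} (B ∩ X)
                  simp only [Finset.card_singleton] at h5
                  omega
          · have : (B ∩ X) \ {z} = B ∩ X := by
              apply Finset.sdiff_eq_self_of_disjoint
              simp only [Finset.disjoint_singleton_right, Finset.mem_inter, not_and]
              intro h; exact absurd h hzB
            rw [this]; exact h1
        obtain ⟨A, hAsub, hAk⟩ := Finset.exists_subset_card_eq hkey
        have hAX : A ⊆ X := fun a ha =>
          Finset.mem_of_mem_inter_right (Finset.mem_sdiff.1 (hAsub ha)).1
        have hzA : z ∉ A := fun h => by
          have := Finset.mem_sdiff.1 (hAsub h)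
          exact this.2 (Finset.mem_singleton_self z)
        have hC : A ∈ X.powersetCard k := Finset.mem_powersetCard.2 ⟨hAX, hAk⟩
        refine ⟨f ⟨A, hC⟩, (hmemW _).2 ⟨A, hC, rfl⟩, ?_⟩
        simp only [f, dif_neg hzA]
        show A ⊆ B
        exact fun a ha => Finset.mem_of_mem_inter_left (Finset.mem_sdiff.1 (hAsub ha)).1
end

section
/- Let m > 2k, Q ⊆ [m] with |Q| = k−1, and D the set of all (m−k)-subsets of [m] containing Q. Then no family C of at most k vertices of H(m,k) satisfies D ⊆ N(C); hence γ(D, H(m,k)) = k+1. -/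
open Finset

/-- For `Q ⊆ [m]` with `|Q| = k-1` and `D` the set of `(m-k)`-subsets containing `Q`:
no family of at most `k` vertices of `H(m,k)` dominates `D`, while some family of
`k+1` vertices does; hence `γ(D, H(m,k)) = k+1`. -/
theorem gamma_D_eq (m k : ℕ) (hk : 1 ≤ k) (hm : 2 * k < m)
    (Q : Finset (Fin m)) (hQ : Q.card = k - 1) :
    (∀ C : Finset (KVert m k),
        (∀ B : {B : Finset (Fin m) // B.card = m - k}, Q ⊆ B.1 →
          ∃ x ∈ C, (HBK m k).Adj x (Sum.inr B)) → k + 1 ≤ C.card) ∧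
    (∃ X : Finset (KVert m k), X.card = k + 1 ∧
        ∀ B : {B : Finset (Fin m) // B.card = m - k}, Q ⊆ B.1 →
          ∃ x ∈ X, (HBK m k).Adj x (Sum.inr B)) := by
  classical
  have hQc : Qᶜ.card = m - (k - 1) := by
    rw [card_compl, hQ, Fintype.card_fin]
  constructor
  · -- lower bound
    intro C hC
    by_contra hlt
    push_neg at hlt
    have hCk : C.card ≤ k := by omega
    -- for each left vertex, its k-set is not contained in Q
    have hne : ∀ A : {A : Finset (Fin m) // A.card = k}, (A.1 \ Q).Nonempty := by
      intro A
      rw [sdiff_nonempty]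
      intro hsub
      have := card_le_card hsub
      rw [A.2, hQ] at this
      omega
    set g : KVert m k → Finset (Fin m) := fun v =>
      match v with
      | Sum.inl A => {(hne A).choose}
      | Sum.inr _ => ∅ with hg
    set T0 := C.biUnion g with hT0
    have hT0card : T0.card ≤ k := by
      calc T0.card ≤ ∑ v ∈ C, (g v).card := card_biUnion_le
        _ ≤ ∑ _v ∈ C, 1 := by
            refine sum_le_sum fun v _ => ?_
            rcases v with A | B <;> simp [g]
        _ = C.card := by simp
        _ ≤ k := hCk
    have hT0sub : T0 ⊆ Qᶜ := by
      intro t ht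
      rw [hT0, mem_biUnion] at ht
      obtain ⟨v, _, htv⟩ := ht
      rcases v with A | B
      · simp only [g, mem_singleton] at htv
        subst htv
        have := (hne A).choose_spec
        rw [mem_sdiff] at this
        simpa using this.2
      · simp [g] at htv
    obtain ⟨T, hT0T, hTQc, hTcard⟩ :=
      exists_subsuperset_card_eq hT0sub hT0card (by omega : k ≤ Qᶜ.card)
    have hBcard : Tᶜ.card = m - k := by
      rw [card_compl, hTcard, Fintype.card_fin]
    have hQB : Q ⊆ Tᶜ := by
      intro q hq
      rw [mem_compl]
      intro hqT
      have := hTQc hqT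
      rw [mem_compl] at this
      exact this hq
    obtain ⟨x, hxC, hxadj⟩ := hC ⟨Tᶜ, hBcard⟩ hQB
    rcases x with A | B
    · have hsub : A.1 ⊆ Tᶜ := hxadj
      have t := (hne A).choose_spec
      rw [mem_sdiff] at t
      have htT : (hne A).choose ∈ T := by
        apply hT0T
        rw [hT0, mem_biUnion]
        exact ⟨Sum.inl A, hxC, by simp [g]⟩
      have := hsub t.1
      rw [mem_compl] at this
      exact this htT
    · exact hxadj.elim
  · -- upper bound: k+1 sets Q ∪ {x} for distinct x ∉ Q
    obtain ⟨S, hSQc, hScard⟩ := exists_subset_card_eq (by omega : k + 1 ≤ Qᶜ.card)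
    have hSnotQ : ∀ x ∈ S, x ∉ Q := fun x hx => by
      have := hSQc hx; rwa [mem_compl] at this
    have hins : ∀ x ∈ S, (insert x Q).card = k := by
      intro x hx
      rw [card_insert_of_notMem (hSnotQ x hx), hQ]
      omega
    set f : {x // x ∈ S} → KVert m k :=
      fun x => Sum.inl ⟨insert x.1 Q, hins x.1 x.2⟩ with hf
    refine ⟨S.attach.image f, ?_, ?_⟩
    · rw [card_image_of_injOn, card_attach, hScard]
      intro x _ y _ hxy
      simp only [f, Sum.inl.injEq, Subtype.mk.injEq] at hxy
      have hx : x.1 ∈ insert y.1 Q := hxy ▸ mem_insert_self x.1 Q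
      rcases mem_insert.1 hx with h | h
      · exact Subtype.ext h
      · exact absurd h (hSnotQ x.1 x.2)
    · intro B hQB
      have hBc : B.1ᶜ.card = k := by
        rw [card_compl, B.2, Fintype.card_fin]
        omega
      have : ¬ S ⊆ B.1ᶜ := by
        intro hsub
        have := card_le_card hsub
        rw [hScard, hBc] at this
        omega
      obtain ⟨x, hxS, hxB⟩ := not_subset.1 this
      rw [mem_compl, not_not] at hxB
      refine ⟨f ⟨x, hxS⟩, mem_image_of_mem f (mem_attach S ⟨x, hxS⟩), ?_⟩
      show insert x Q ⊆ B.1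
      exact insert_subset hxB hQB
end
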